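/- For q = 2, the graph NU(3,4) is strongly regular with parameters (12, 9, 6, 9). -/

import Mathlib

set_option linter.unusedSectionVars false
set_option maxHeartbeats 1000000


open Projectivization
open scoped LinearAlgebra.Projectivization

variable (F : Type) [Field F] [Fintype F]

/-- The projective space PG(n, |F|) over `F`, as the projectivization of `Fin (n+1) → F`. -/
abbrev PG (n : ℕ) := ℙ F (Fin (n+1) → F)

/-- The Hermitian variety `H(n,q^2)`: points `[x_0 : ... : x_n]` with
`x_0^{q+1} + ... + x_n^{q+1} = 0`. -/
def Herm (q n : ℕ) : Set (PG F n) :=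
  {p | ∑ i, (p.rep i) ^ (q+1) = 0}

/-- The set of points of `PG(n,q^2)` lying on the line given by a `2`-dimensional subspace. -/
def lineSet (n : ℕ) (W : Submodule F (Fin (n+1) → F)) : Set (PG F n) :=
  {p | p.submodule ≤ W}

/-- `W` determines a line of `PG(n,q^2)`, i.e. it is a `2`-dimensional subspace. -/
def IsLine (n : ℕ) (W : Submodule F (Fin (n+1) → F)) : Prop :=
  Module.finrank F W = 2

/-- A line is tangent to `H(n,q^2)` if it meets it in exactly one point. -/
def IsTangent (q n : ℕ) (W : Submodule F (Fin (n+1) → F)) : Prop :=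
  IsLine F n W ∧ (lineSet F n W ∩ Herm F q n).ncard = 1

/-- The graph `NU(n+1,q^2)`: vertices are points off the Hermitian variety, two distinct
vertices adjacent iff the line joining them is tangent to `H(n,q^2)`. -/
def NU (q n : ℕ) : SimpleGraph {p : PG F n // p ∉ Herm F q n} where
  Adj u v := u ≠ v ∧ IsTangent F q n (Submodule.span F {u.1.rep, v.1.rep})
  symm := by
    constructor
    rintro u v ⟨h1, h2⟩
    exact ⟨h1.symm, by rwa [Set.pair_comm]⟩
  loopless := ⟨fun u h => h.1 rfl⟩

/-- A strongly regular graph with parameters `(v, k, l, m)`. -/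
def IsSRG {V : Type} (G : SimpleGraph V) (v k l m : ℤ) : Prop :=
  (Nat.card V : ℤ) = v ∧
  (∀ x, (Nat.card (G.neighborSet x) : ℤ) = k) ∧
  (∀ x y, G.Adj x y → (Nat.card (G.commonNeighbors x y) : ℤ) = l) ∧
  (∀ x y, x ≠ y → ¬ G.Adj x y → (Nat.card (G.commonNeighbors x y) : ℤ) = m)


/-! ### Auxiliary development -/

section FieldFacts

variable {E : Type} [Field E] [Fintype E]

lemma cube_eq_one (hE : Fintype.card E = 4) {x : E} (hx : x ≠ 0) : x ^ 3 = 1 := by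
  have := FiniteField.pow_card_sub_one_eq_one x hx
  rwa [hE] at this

lemma four_eq_zero (hE : Fintype.card E = 4) : (4 : E) = 0 := by
  have := FiniteField.cast_card_eq_zero E
  rwa [hE] at this

lemma two_eq_zero (hE : Fintype.card E = 4) : (2 : E) = 0 := by
  have h4 : (2 : E) * 2 = 0 := by
    have := four_eq_zero hE
    linear_combination this
  rcases mul_eq_zero.1 h4 with h | h <;> exact h

end FieldFacts

section Count

variable {E : Type} [Field E] [Fintype E]

/-- Number of Hermitian points on the projective line spanned by `a`, `b`. -/
def cnt [DecidableEq E] (a b : Fin 3 → E) : ℕ :=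
  (Finset.univ.filter (fun t : E => ∑ i, (a i + t * b i) ^ 3 = 0)).card +
    (if (∑ i, (b i) ^ 3 = 0) then 1 else 0)

lemma mem_herm_iff (hE : Fintype.card E = 4) (v : Fin 3 → E) (hv : v ≠ 0) :
    mk E v hv ∈ Herm E 2 2 ↔ ∑ i, v i ^ 3 = 0 := by
  obtain ⟨c, hc⟩ := exists_smul_eq_mk_rep E v hv
  have : ∀ i, (mk E v hv).rep i = (c : E) * v i := by
    intro i; rw [← hc]; rfl
  unfold Herm
  simp only [Set.mem_setOf_eq, this, mul_pow]
  have h1 : (c : E) ^ (2+1) = 1 := cube_eq_one hE c.ne_zero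
  rw [h1]
  simp only [one_mul]


lemma indep_of_ne {a b : Fin 3 → E} (ha : a ≠ 0) (hb : b ≠ 0)
    (h : mk E a ha ≠ mk E b hb) : LinearIndependent E ![a, b] := by
  rw [LinearIndependent.pair_iff' ha]
  intro c hc
  have hc0 : c ≠ 0 := by rintro rfl; rw [zero_smul] at hc; exact hb hc.symm
  exact h (((mk_eq_mk_iff' E a b ha hb).2 ⟨c⁻¹, by rw [← hc, smul_smul, inv_mul_cancel₀ hc0, one_smul]⟩))

lemma vec_ne_zero_left {a b : Fin 3 → E} (h : LinearIndependent E ![a, b]) : a ≠ 0 := by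
  intro h0
  rw [LinearIndependent.pair_iff] at h
  have := (h 1 0 (by simp [h0])).1
  simp at this

lemma vec_ne_zero_right {a b : Fin 3 → E} (h : LinearIndependent E ![a, b]) : b ≠ 0 := by
  intro h0
  rw [LinearIndependent.pair_iff] at h
  have := (h 0 1 (by simp [h0])).2
  simp at this

lemma add_smul_ne_zero {a b : Fin 3 → E} (h : LinearIndependent E ![a, b]) (t : E) :
    a + t • b ≠ 0 := by
  intro h0
  rw [LinearIndependent.pair_iff] at h
  have := (h 1 t (by rw [one_smul]; exact h0)).1
  simp at this

lemma isLine_span {a b : Fin 3 → E} (h : LinearIndependent E ![a, b]) :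
    IsLine E 2 (Submodule.span E {a, b}) := by
  have hr : ({a, b} : Set (Fin 3 → E)) = Set.range ![a, b] := by
    ext x; simp [Fin.exists_fin_two, eq_comm]; tauto
  unfold IsLine
  rw [hr, finrank_span_eq_card h, Fintype.card_fin]

lemma ncard_line_inter_herm [DecidableEq E] (hE : Fintype.card E = 4)
    {a b : Fin 3 → E} (h : LinearIndependent E ![a, b]) :
    (lineSet E 2 (Submodule.span E {a, b}) ∩ Herm E 2 2).ncard = cnt a b := by
  have hb : b ≠ 0 := vec_ne_zero_right h
  have hne : ∀ t : E, a + t • b ≠ 0 := add_smul_ne_zero h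
  have hpair := LinearIndependent.pair_iff.1 h
  set f : E → ℙ E (Fin 3 → E) := fun t => mk E (a + t • b) (hne t) with hf
  have hfinj : Function.Injective f := by
    intro s t hst
    rw [hf, mk_eq_mk_iff'] at hst
    obtain ⟨c, hc⟩ := hst
    have key : (c - 1) • a + (c * t - s) • b = 0 := by
      have : c • (a + t • b) - (a + s • b) = (c - 1) • a + (c * t - s) • b := by module
      rw [← this, hc, sub_self]
    have := hpair _ _ key
    have hc1 : c = 1 := by linear_combination this.1
    have : c * t - s = 0 := this.2
    rw [hc1, one_mul] at this
    exact (sub_eq_zero.1 this).symm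
  have hbnotin : ∀ t : E, f t ≠ mk E b hb := by
    intro t hmem
    rw [hf, mk_eq_mk_iff'] at hmem
    obtain ⟨c, hc⟩ := hmem
    have key : (1 : E) • a + (t - c) • b = 0 := by
      have : (a + t • b) - c • b = (1 : E) • a + (t - c) • b := by module
      rw [← this, ← hc, sub_self]
    exact one_ne_zero (hpair _ _ key).1
  have hline : lineSet E 2 (Submodule.span E {a, b}) = Set.range f ∪ {mk E b hb} := by
    ext p
    constructor
    · intro hp
      induction p using Projectivization.ind with
      | h v hv =>
        have hv' : v ∈ Submodule.span E {a, b} := by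
          have := hp
          simp only [lineSet, Set.mem_setOf_eq, submodule_mk] at this
          exact (Submodule.span_singleton_le_iff_mem v _).1 this
        obtain ⟨s, t, hst⟩ := Submodule.mem_span_pair.1 hv'
        by_cases hs : s = 0
        · right
          rw [hs, zero_smul, zero_add] at hst
          have ht : t ≠ 0 := by rintro rfl; rw [zero_smul] at hst; exact hv hst.symm
          rw [Set.mem_singleton_iff]
          exact (mk_eq_mk_iff' E v b hv hb).2 ⟨t, hst⟩
        · left
          refine ⟨s⁻¹ * t, ?_⟩
          show mk E (a + (s⁻¹ * t) • b) (hne _) = mk E v hv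
          refine (mk_eq_mk_iff' E _ v (hne _) hv).2 ⟨s⁻¹, ?_⟩
          rw [← hst, smul_add, smul_smul, smul_smul, inv_mul_cancel₀ hs, one_smul]
    · intro hp
      rcases hp with ⟨t, rfl⟩ | hp
      · simp only [lineSet, Set.mem_setOf_eq, hf, submodule_mk]
        rw [Submodule.span_singleton_le_iff_mem]
        exact Submodule.mem_span_pair.2 ⟨1, t, by rw [one_smul]⟩
      · rw [Set.mem_singleton_iff] at hp
        subst hp
        simp only [lineSet, Set.mem_setOf_eq, submodule_mk]
        rw [Submodule.span_singleton_le_iff_mem]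
        exact Submodule.mem_span_pair.2 ⟨0, 1, by rw [one_smul, zero_smul, zero_add]⟩
  rw [hline, Set.union_inter_distrib_right]
  have hdisj : Disjoint (Set.range f ∩ Herm E 2 2) ({mk E b hb} ∩ Herm E 2 2) := by
    rw [Set.disjoint_left]
    rintro x ⟨⟨t, rfl⟩, -⟩ ⟨hx, -⟩
    exact hbnotin t (Set.mem_singleton_iff.1 hx)
  rw [Set.ncard_union_eq hdisj]
  have himg : Set.range f ∩ Herm E 2 2 =
      f '' {t : E | ∑ i, (a i + t * b i) ^ 3 = 0} := by
    ext p
    constructor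
    · rintro ⟨⟨t, rfl⟩, hmem⟩
      refine ⟨t, ?_, rfl⟩
      rw [Set.mem_setOf_eq]
      have := (mem_herm_iff hE _ (hne t)).1 hmem
      simpa [Pi.add_apply, Pi.smul_apply, smul_eq_mul] using this
    · rintro ⟨t, ht, rfl⟩
      refine ⟨⟨t, rfl⟩, ?_⟩
      rw [hf]
      rw [mem_herm_iff hE _ (hne t)]
      simpa [Pi.add_apply, Pi.smul_apply, smul_eq_mul] using ht
  rw [himg, Set.ncard_image_of_injective _ hfinj]
  have hset : {t : E | ∑ i, (a i + t * b i) ^ 3 = 0} =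
      ↑(Finset.univ.filter (fun t : E => ∑ i, (a i + t * b i) ^ 3 = 0)) := by
    ext t; simp
  rw [hset, Set.ncard_coe_finset]
  unfold cnt
  congr 1
  by_cases hh : ∑ i, (b i) ^ 3 = 0
  · rw [if_pos hh]
    have : ({mk E b hb} : Set (ℙ E (Fin 3 → E))) ∩ Herm E 2 2 = {mk E b hb} := by
      rw [Set.inter_eq_left, Set.singleton_subset_iff]
      exact (mem_herm_iff hE b hb).2 hh
    rw [this, Set.ncard_singleton]
  · rw [if_neg hh]
    have : ({mk E b hb} : Set (ℙ E (Fin 3 → E))) ∩ Herm E 2 2 = ∅ := by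
      rw [Set.eq_empty_iff_forall_notMem]
      rintro x ⟨hx1, hx2⟩
      rw [Set.mem_singleton_iff] at hx1
      subst hx1
      exact hh ((mem_herm_iff hE b hb).1 hx2)
    rw [this, Set.ncard_empty]

lemma span_rep_pair {a b : Fin 3 → E} (ha : a ≠ 0) (hb : b ≠ 0) :
    Submodule.span E {(mk E a ha).rep, (mk E b hb).rep} = Submodule.span E {a, b} := by
  rw [show ({(mk E a ha).rep, (mk E b hb).rep} : Set (Fin 3 → E))
      = insert (mk E a ha).rep {(mk E b hb).rep} from rfl]
  rw [show ({a, b} : Set (Fin 3 → E)) = insert a {b} from rfl]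
  rw [Submodule.span_insert, Submodule.span_insert]
  rw [← submodule_eq, ← submodule_eq, submodule_mk, submodule_mk]

lemma adj_iff [DecidableEq E] (hE : Fintype.card E = 4) {a b : Fin 3 → E}
    (ha : a ≠ 0) (hb : b ≠ 0)
    (pa : mk E a ha ∉ Herm E 2 2) (pb : mk E b hb ∉ Herm E 2 2) :
    (NU E 2 2).Adj ⟨mk E a ha, pa⟩ ⟨mk E b hb, pb⟩ ↔
      (mk E a ha ≠ mk E b hb ∧ cnt a b = 1) := by
  constructor
  · rintro (⟨h1, h2⟩ : _ ∧ _)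
    have hne : mk E a ha ≠ mk E b hb := fun h => h1 (Subtype.ext h)
    refine ⟨hne, ?_⟩
    have hind := indep_of_ne ha hb hne
    have := h2.2
    rw [show (⟨mk E a ha, pa⟩ : {p : PG E 2 // p ∉ Herm E 2 2}).1 = mk E a ha from rfl,
      show (⟨mk E b hb, pb⟩ : {p : PG E 2 // p ∉ Herm E 2 2}).1 = mk E b hb from rfl] at this
    rw [span_rep_pair ha hb] at this
    rw [← ncard_line_inter_herm hE hind]
    exact this
  · rintro (⟨hne, hc⟩ : _ ∧ _)
    have hind := indep_of_ne ha hb hne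
    refine (show _ ∧ _ from ⟨fun h => hne (congrArg Subtype.val h), ?_⟩)
    constructor
    · rw [show (⟨mk E a ha, pa⟩ : {p : PG E 2 // p ∉ Herm E 2 2}).1 = mk E a ha from rfl,
        show (⟨mk E b hb, pb⟩ : {p : PG E 2 // p ∉ Herm E 2 2}).1 = mk E b hb from rfl]
      rw [span_rep_pair ha hb]
      exact isLine_span hind
    · rw [show (⟨mk E a ha, pa⟩ : {p : PG E 2 // p ∉ Herm E 2 2}).1 = mk E a ha from rfl,
        show (⟨mk E b hb, pb⟩ : {p : PG E 2 // p ∉ Herm E 2 2}).1 = mk E b hb from rfl]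
      rw [span_rep_pair ha hb]
      rw [ncard_line_inter_herm hE hind]
      exact hc

end Count

section Norm

variable {E : Type} [Field E] [Fintype E]

def normc (v : Fin 3 → E) : Prop :=
  v 0 = 1 ∨ (v 0 = 0 ∧ v 1 = 1) ∨ (v 0 = 0 ∧ v 1 = 0 ∧ v 2 = 1)

instance [DecidableEq E] : DecidablePred (normc (E := E)) := fun _ => by
  unfold normc; infer_instance

lemma normc_ne_zero {v : Fin 3 → E} (h : normc v) : v ≠ 0 := by
  rintro rfl
  rcases h with h | ⟨-, h⟩ | ⟨-, -, h⟩ <;> exact one_ne_zero h.symm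

lemma norm_unique {v w : Fin 3 → E} (hnv : normc v) (hnw : normc w)
    (h : mk E v (normc_ne_zero hnv) = mk E w (normc_ne_zero hnw)) : v = w := by
  obtain ⟨c, hc⟩ := (mk_eq_mk_iff' E v w (normc_ne_zero hnv) (normc_ne_zero hnw)).1 h
  have h0 := congrFun hc 0
  have h1 := congrFun hc 1
  have h2 := congrFun hc 2
  simp only [Pi.smul_apply, smul_eq_mul] at h0 h1 h2
  have hc1 : c = 1 := by
    rcases hnv with hv | ⟨hv0, hv1⟩ | ⟨hv0, hv1, hv2⟩ <;>
      rcases hnw with hw | ⟨hw0, hw1⟩ | ⟨hw0, hw1, hw2⟩ <;> simp_all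
  rw [hc1, one_smul] at hc
  exact hc.symm

lemma exists_normc {v : Fin 3 → E} (hv : v ≠ 0) :
    ∃ w, ∃ hw : normc w, mk E w (normc_ne_zero hw) = mk E v hv := by
  by_cases h0 : v 0 ≠ 0
  · refine ⟨(v 0)⁻¹ • v, Or.inl (by simp [inv_mul_cancel₀ h0]), ?_⟩
    exact (mk_eq_mk_iff' E _ v _ hv).2 ⟨(v 0)⁻¹, rfl⟩
  · push_neg at h0
    by_cases h1 : v 1 ≠ 0
    · refine ⟨(v 1)⁻¹ • v, Or.inr (Or.inl ⟨by simp [h0], by simp [inv_mul_cancel₀ h1]⟩), ?_⟩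
      exact (mk_eq_mk_iff' E _ v _ hv).2 ⟨(v 1)⁻¹, rfl⟩
    · push_neg at h1
      have h2 : v 2 ≠ 0 := by
        intro h2
        apply hv
        funext i
        fin_cases i <;> assumption
      refine ⟨(v 2)⁻¹ • v,
        Or.inr (Or.inr ⟨by simp [h0], by simp [h1], by simp [inv_mul_cancel₀ h2]⟩), ?_⟩
      exact (mk_eq_mk_iff' E _ v _ hv).2 ⟨(v 2)⁻¹, rfl⟩

end Norm

/-! ### The concrete field with four elements -/

inductive K4 : Type | O | I | A | B
deriving DecidableEq

instance : Fintype K4 := ⟨{K4.O, K4.I, K4.A, K4.B}, fun x => by cases x <;> simp⟩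

namespace K4

instance : Zero K4 := ⟨O⟩
instance : One K4 := ⟨I⟩
instance : Add K4 := ⟨fun x y => match x, y with
  | O, x => x | x, O => x
  | I, I => O | I, A => B | I, B => A
  | A, I => B | A, A => O | A, B => I
  | B, I => A | B, A => I | B, B => O⟩
instance : Mul K4 := ⟨fun x y => match x, y with
  | O, _ => O | _, O => O
  | I, x => x | x, I => x
  | A, A => B | A, B => I
  | B, A => I | B, B => A⟩
instance : Neg K4 := ⟨id⟩
instance : Inv K4 := ⟨fun x => match x with | O => O | I => I | A => B | B => A⟩

instance instCommRing : CommRing K4 where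
  add_assoc := by decide
  zero_add := by decide
  add_zero := by decide
  add_comm := by decide
  neg_add_cancel := by decide
  mul_assoc := by decide
  one_mul := by decide
  mul_one := by decide
  left_distrib := by decide
  right_distrib := by decide
  mul_comm := by decide
  zero_mul := by decide
  mul_zero := by decide
  nsmul := nsmulRec
  zsmul := zsmulRec

instance instField : Field K4 where
  exists_pair_ne := ⟨O, I, by decide⟩
  mul_inv_cancel := by decide
  inv_zero := by decide
  nnqsmul := _
  qsmul := _

theorem card_K4 : Fintype.card K4 = 4 := rfl

/-- The vertex type of the concrete model of `NU(3,4)`. -/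
abbrev Vert : Type := {v : Fin 3 → K4 // normc v ∧ ¬ (∑ i, v i ^ 3 = 0)}

/-- The concrete model of the graph `NU(3,4)`. -/
def G' : SimpleGraph Vert where
  Adj u v := u ≠ v ∧ cnt u.1 v.1 = 1 ∧ cnt v.1 u.1 = 1
  symm := by constructor; rintro u v ⟨h1, h2, h3⟩; exact ⟨h1.symm, h3, h2⟩
  loopless := ⟨fun u h => h.1 rfl⟩

instance : DecidableRel G'.Adj := fun u v =>
  inferInstanceAs (Decidable (u ≠ v ∧ cnt u.1 v.1 = 1 ∧ cnt v.1 u.1 = 1))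

example : Nat.card Vert = 12 := by rw [Nat.card_eq_fintype_card]; decide

example : ∀ x : Vert, Fintype.card (G'.neighborSet x) = 9 := by decide

example : ∀ x y : Vert, G'.Adj x y → Fintype.card (G'.commonNeighbors x y) = 6 := by decide

example : ∀ x y : Vert, x ≠ y → ¬ G'.Adj x y → Fintype.card (G'.commonNeighbors x y) = 9 := by decide

end K4
@[simp] lemma add_OO : (K4.O + K4.O : K4) = K4.O := rfl
@[simp] lemma add_OI : (K4.O + K4.I : K4) = K4.I := rfl
@[simp] lemma add_OA : (K4.O + K4.A : K4) = K4.A := rfl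
@[simp] lemma add_OB : (K4.O + K4.B : K4) = K4.B := rfl
@[simp] lemma add_IO : (K4.I + K4.O : K4) = K4.I := rfl
@[simp] lemma add_II : (K4.I + K4.I : K4) = K4.O := rfl
@[simp] lemma add_IA : (K4.I + K4.A : K4) = K4.B := rfl
@[simp] lemma add_IB : (K4.I + K4.B : K4) = K4.A := rfl
@[simp] lemma add_AO : (K4.A + K4.O : K4) = K4.A := rfl
@[simp] lemma add_AI : (K4.A + K4.I : K4) = K4.B := rfl
@[simp] lemma add_AA : (K4.A + K4.A : K4) = K4.O := rfl
@[simp] lemma add_AB : (K4.A + K4.B : K4) = K4.I := rfl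
@[simp] lemma add_BO : (K4.B + K4.O : K4) = K4.B := rfl
@[simp] lemma add_BI : (K4.B + K4.I : K4) = K4.A := rfl
@[simp] lemma add_BA : (K4.B + K4.A : K4) = K4.I := rfl
@[simp] lemma add_BB : (K4.B + K4.B : K4) = K4.O := rfl
@[simp] lemma mul_OO : (K4.O * K4.O : K4) = K4.O := rfl
@[simp] lemma mul_OI : (K4.O * K4.I : K4) = K4.O := rfl
@[simp] lemma mul_OA : (K4.O * K4.A : K4) = K4.O := rfl
@[simp] lemma mul_OB : (K4.O * K4.B : K4) = K4.O := rfl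
@[simp] lemma mul_IO : (K4.I * K4.O : K4) = K4.O := rfl
@[simp] lemma mul_II : (K4.I * K4.I : K4) = K4.I := rfl
@[simp] lemma mul_IA : (K4.I * K4.A : K4) = K4.A := rfl
@[simp] lemma mul_IB : (K4.I * K4.B : K4) = K4.B := rfl
@[simp] lemma mul_AO : (K4.A * K4.O : K4) = K4.O := rfl
@[simp] lemma mul_AI : (K4.A * K4.I : K4) = K4.A := rfl
@[simp] lemma mul_AA : (K4.A * K4.A : K4) = K4.B := rfl
@[simp] lemma mul_AB : (K4.A * K4.B : K4) = K4.I := rfl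
@[simp] lemma mul_BO : (K4.B * K4.O : K4) = K4.O := rfl
@[simp] lemma mul_BI : (K4.B * K4.I : K4) = K4.B := rfl
@[simp] lemma mul_BA : (K4.B * K4.A : K4) = K4.I := rfl
@[simp] lemma mul_BB : (K4.B * K4.B : K4) = K4.A := rfl

/-! ### Transport from `K4` to an arbitrary field with four elements -/

section Bridge

variable {F : Type} [Field F] [Fintype F]

lemma exists_gen (hF : Fintype.card F = 4) :
    ∃ a : F, (1+1 : F) = 0 ∧ a * a = a + 1 ∧ a ≠ 0 ∧ a ≠ 1 := by
  classical
  have h2 : (1+1 : F) = 0 := by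
    have := two_eq_zero hF; linear_combination this
  have hex : ∃ a : F, a ≠ 0 ∧ a ≠ 1 := by
    by_contra h
    push_neg at h
    have hsub : (Finset.univ : Finset F) ⊆ {0, 1} := by
      intro x _
      rcases eq_or_ne x 0 with h0 | h0
      · simp [h0]
      · simp [h x h0]
    have := Finset.card_le_card hsub
    rw [Finset.card_univ, hF] at this
    have hle : ({0, 1} : Finset F).card ≤ 2 :=
      (Finset.card_insert_le _ _).trans (by simp)
    omega
  obtain ⟨a, ha0, ha1⟩ := hex
  refine ⟨a, h2, ?_, ha0, ha1⟩
  have hcube : a ^ 3 = 1 := cube_eq_one hF ha0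
  have hfac : (a - 1) * (a * a + a + 1) = 0 := by linear_combination hcube
  rcases mul_eq_zero.1 hfac with h | h
  · exact absurd (sub_eq_zero.1 h) ha1
  · linear_combination h - (a+1) * h2

def sig (a : F) : K4 → F
  | .O => 0
  | .I => 1
  | .A => a
  | .B => a + 1

def sigHom (a : F) (h2 : (1+1 : F) = 0) (hsq : a * a = a + 1) : K4 →+* F where
  toFun := sig a
  map_one' := rfl
  map_zero' := rfl
  map_add' := by
    intro x y
    cases x <;> cases y <;>
      simp only [add_OO, add_OI, add_OA, add_OB, add_IO, add_II, add_IA, add_IB,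
        add_AO, add_AI, add_AA, add_AB, add_BO, add_BI, add_BA, add_BB, sig] <;>
      first
        | ring1
        | linear_combination h2
        | linear_combination a * h2
        | linear_combination (a+1) * h2
        | linear_combination (-1 : F) * h2
        | linear_combination (-a) * h2
        | linear_combination (-(a+1)) * h2
  map_mul' := by
    intro x y
    cases x <;> cases y <;>
      simp only [mul_OO, mul_OI, mul_OA, mul_OB, mul_IO, mul_II, mul_IA, mul_IB,
        mul_AO, mul_AI, mul_AA, mul_AB, mul_BO, mul_BI, mul_BA, mul_BB, sig] <;>
      first
        | ring1
        | linear_combination hsq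
        | linear_combination (-1 : F) * hsq
        | linear_combination hsq + h2
        | linear_combination hsq - h2
        | linear_combination hsq + a * h2
        | linear_combination hsq - a * h2
        | linear_combination hsq + (a+1) * h2
        | linear_combination hsq - (a+1) * h2
        | linear_combination (-1:F) * hsq + h2
        | linear_combination (-1:F) * hsq - h2
        | linear_combination (-1:F) * hsq + a * h2
        | linear_combination (-1:F) * hsq - a * h2
        | linear_combination (-1:F) * hsq + (a+1) * h2
        | linear_combination (-1:F) * hsq - (a+1) * h2

lemma sig_surj (a : F) (hF : Fintype.card F = 4) (h2 : (1+1 : F) = 0)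
    (ha0 : a ≠ 0) (ha1 : a ≠ 1) : Function.Surjective (sig (F := F) a) := by
  classical
  have hB0 : a + 1 ≠ 0 := by
    intro h
    apply ha1
    linear_combination h - h2
  have hB1 : a + 1 ≠ 1 := fun h => ha0 (by linear_combination h)
  have hBa : a + 1 ≠ a := fun h => one_ne_zero (by linear_combination h)
  have hcard : ({0, 1, a, a + 1} : Finset F).card = 4 := by
    rw [Finset.card_insert_of_notMem (by simp [ha0.symm, hB0.symm]),
      Finset.card_insert_of_notMem (by simp [ha1.symm, hB1.symm]),
      Finset.card_insert_of_notMem (by simp [hBa.symm]),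
      Finset.card_singleton]
  have huniv : ({0, 1, a, a + 1} : Finset F) = Finset.univ :=
    Finset.eq_univ_of_card _ (by rw [hcard, hF])
  intro z
  have hz : z ∈ ({0, 1, a, a + 1} : Finset F) := huniv ▸ Finset.mem_univ z
  simp only [Finset.mem_insert, Finset.mem_singleton] at hz
  rcases hz with rfl | rfl | rfl | rfl
  · exact ⟨K4.O, rfl⟩
  · exact ⟨K4.I, rfl⟩
  · exact ⟨K4.A, rfl⟩
  · exact ⟨K4.B, rfl⟩

end Bridge

section Iso

variable {F : Type} [Field F] [Fintype F]

lemma exists_iso (hF : Fintype.card F = 4) : Nonempty (K4.G' ≃g NU F 2 2) := by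
  classical
  obtain ⟨a, h2, hsq, ha0, ha1⟩ := exists_gen (F := F) hF
  set σ : K4 →+* F := sigHom a h2 hsq with hσdef
  have hσi : Function.Injective σ := σ.injective
  have hσs : Function.Surjective σ := sig_surj a hF h2 ha0 ha1
  have hσ0 : ∀ x : K4, σ x = 0 ↔ x = 0 :=
    fun x => ⟨fun h => hσi (h.trans (map_zero σ).symm), fun h => h ▸ map_zero σ⟩
  have hvec : ∀ v : Fin 3 → K4, v ≠ 0 → (fun i => σ (v i)) ≠ 0 := by
    intro v hv h
    apply hv
    funext i
    exact (hσ0 (v i)).1 (congrFun h i)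
  have hsum : ∀ v : Fin 3 → K4, ∑ i, (σ (v i)) ^ 3 = σ (∑ i, (v i) ^ 3) := by
    intro v
    rw [map_sum]
    exact Finset.sum_congr rfl fun i _ => (map_pow σ (v i) 3).symm
  have hherm : ∀ (v : Fin 3 → K4) (hv : v ≠ 0),
      (mk F (fun i => σ (v i)) (hvec v hv) ∈ Herm F 2 2) ↔ (∑ i, (v i) ^ 3 = 0) := by
    intro v hv
    rw [mem_herm_iff hF, hsum, hσ0]
  let eV : K4.Vert → {p : PG F 2 // p ∉ Herm F 2 2} := fun v =>
    ⟨mk F (fun i => σ (v.1 i)) (hvec v.1 (normc_ne_zero v.2.1)),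
      fun h => v.2.2 ((hherm v.1 (normc_ne_zero v.2.1)).1 h)⟩
  have hmkinj : ∀ (v w : Fin 3 → K4) (hv : v ≠ 0) (hw : w ≠ 0),
      mk F (fun i => σ (v i)) (hvec v hv) = mk F (fun i => σ (w i)) (hvec w hw) →
        mk K4 v hv = mk K4 w hw := by
    intro v w hv hw h
    obtain ⟨c, hc⟩ := (mk_eq_mk_iff' F _ _ _ _).1 h
    obtain ⟨c', rfl⟩ := hσs c
    refine (mk_eq_mk_iff' K4 v w hv hw).2 ⟨c', funext fun i => hσi ?_⟩
    have hci := congrFun hc i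
    simp only [Pi.smul_apply, smul_eq_mul] at hci ⊢
    rw [map_mul]
    exact hci
  have hmkfwd : ∀ (v w : Fin 3 → K4) (hv : v ≠ 0) (hw : w ≠ 0),
      mk K4 v hv = mk K4 w hw →
        mk F (fun i => σ (v i)) (hvec v hv) = mk F (fun i => σ (w i)) (hvec w hw) := by
    intro v w hv hw h
    obtain ⟨c, hc⟩ := (mk_eq_mk_iff' K4 v w hv hw).1 h
    refine (mk_eq_mk_iff' F _ _ _ _).2 ⟨σ c, funext fun i => ?_⟩
    have hci := congrFun hc i
    simp only [Pi.smul_apply, smul_eq_mul] at hci ⊢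
    rw [← map_mul]
    exact congrArg σ hci
  have hinj : Function.Injective eV := by
    intro u v h
    have h1 : mk F _ (hvec u.1 (normc_ne_zero u.2.1)) = mk F _ (hvec v.1 (normc_ne_zero v.2.1)) :=
      congrArg Subtype.val h
    exact Subtype.ext (norm_unique u.2.1 v.2.1 (hmkinj _ _ _ _ h1))
  have hsurj : Function.Surjective eV := by
    rintro ⟨p, hp⟩
    induction p using Projectivization.ind with
    | h u hu =>
      have hch : ∀ i, σ ((hσs (u i)).choose) = u i := fun i => (hσs (u i)).choose_spec
      set u' : Fin 3 → K4 := fun i => (hσs (u i)).choose with hu'def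
      have hu'0 : u' ≠ 0 := by
        intro h0
        apply hu
        funext i
        have hz : u' i = 0 := congrFun h0 i
        have hσu : σ (u' i) = u i := hch i
        rw [hz, map_zero] at hσu
        exact hσu.symm
      obtain ⟨w, hw, hmkw⟩ := exists_normc hu'0
      have hmkF : mk F (fun i => σ (w i)) (hvec w (normc_ne_zero hw)) = mk F u hu := by
        have h1 := hmkfwd w u' (normc_ne_zero hw) hu'0 hmkw
        have h2' : mk F (fun i => σ (u' i)) (hvec u' hu'0) = mk F u hu := by
          congr 1
          · funext i; exact hch i
        exact h1.trans h2'
      have hwherm : ¬ (∑ i, (w i) ^ 3 = 0) := by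
        intro hcontra
        apply hp
        have := (hherm w (normc_ne_zero hw)).2 hcontra
        rwa [hmkF] at this
      exact ⟨⟨w, hw, hwherm⟩, Subtype.ext hmkF⟩
  have hcnt : ∀ x y : Fin 3 → K4,
      cnt (fun i => σ (x i)) (fun i => σ (y i)) = cnt x y := by
    intro x y
    unfold cnt
    have hpush : ∀ s : K4, ∑ i, (σ (x i) + σ s * σ (y i)) ^ 3 = σ (∑ i, (x i + s * y i) ^ 3) := by
      intro s
      rw [map_sum]
      refine Finset.sum_congr rfl fun i _ => ?_
      rw [map_pow, map_add, map_mul]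
    congr 1
    · refine (Finset.card_bijective (σ : K4 → F) ⟨hσi, hσs⟩ fun s => ?_).symm
      simp only [Finset.mem_filter, Finset.mem_univ, true_and]
      rw [hpush s, hσ0]
    · rw [hsum y]
      exact if_congr (hσ0 _) rfl rfl
  refine ⟨{ toEquiv := Equiv.ofBijective eV ⟨hinj, hsurj⟩, map_rel_iff' := ?_ }⟩
  intro u v
  show (NU F 2 2).Adj (eV u) (eV v) ↔ K4.G'.Adj u v
  have hADJ : ∀ s t : K4.Vert, (NU F 2 2).Adj (eV s) (eV t) ↔
      (mk F (fun i => σ (s.1 i)) (hvec s.1 (normc_ne_zero s.2.1)) ≠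
        mk F (fun i => σ (t.1 i)) (hvec t.1 (normc_ne_zero t.2.1)) ∧
        cnt (fun i => σ (s.1 i)) (fun i => σ (t.1 i)) = 1) := by
    intro s t
    exact adj_iff hF _ _ _ _
  constructor
  · intro hadj
    have h1 := (hADJ u v).1 hadj
    have h2' := (hADJ v u).1 ((NU F 2 2).adj_symm hadj)
    refine (show _ ∧ _ ∧ _ from ⟨?_, ?_, ?_⟩)
    · intro h
      subst h
      exact h1.1 rfl
    · rw [← hcnt u.1 v.1]; exact h1.2
    · rw [← hcnt v.1 u.1]; exact h2'.2
  · rintro (⟨hne, hc1, -⟩ : _ ∧ _ ∧ _)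
    refine (hADJ u v).2 ⟨?_, ?_⟩
    · intro h
      exact hne (Subtype.ext (norm_unique u.2.1 v.2.1 (hmkinj _ _ _ _ h)))
    · rw [hcnt u.1 v.1]; exact hc1

end Iso

section Transfer

lemma isSRG_of_iso {V W : Type} {G : SimpleGraph V} {H : SimpleGraph W} (φ : G ≃g H)
    {v k l m : ℤ} (h : IsSRG G v k l m) : IsSRG H v k l m := by
  obtain ⟨h1, h2, h3, h4⟩ := h
  have hcomm : ∀ x y : V,
      Nat.card (G.commonNeighbors x y) = Nat.card (H.commonNeighbors (φ x) (φ y)) := by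
    intro x y
    refine Nat.card_congr (Equiv.subtypeEquiv φ.toEquiv fun z => ?_)
    simp only [SimpleGraph.mem_commonNeighbors]
    rw [← φ.map_adj_iff, ← φ.map_adj_iff]
    rfl
  refine ⟨?_, ?_, ?_, ?_⟩
  · rw [← h1]
    exact congrArg _ (Nat.card_congr φ.toEquiv.symm)
  · intro x
    rw [← h2 (φ.symm x)]
    have := Nat.card_congr (φ.mapNeighborSet (φ.symm x))
    rw [RelIso.apply_symm_apply φ] at this
    rw [this]
  · intro x y hxy
    have hadj : G.Adj (φ.symm x) (φ.symm y) := by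
      rw [← φ.symm.map_adj_iff] at hxy
      exact hxy
    have := hcomm (φ.symm x) (φ.symm y)
    rw [RelIso.apply_symm_apply φ, RelIso.apply_symm_apply φ] at this
    rw [← this]
    exact h3 _ _ hadj
  · intro x y hne hnadj
    have hne' : φ.symm x ≠ φ.symm y := fun h => hne (by
      have := congrArg φ h
      rwa [RelIso.apply_symm_apply φ, RelIso.apply_symm_apply φ] at this)
    have hnadj' : ¬ G.Adj (φ.symm x) (φ.symm y) := by
      rw [← φ.symm.map_adj_iff] at hnadj
      exact hnadj
    have := hcomm (φ.symm x) (φ.symm y)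
    rw [RelIso.apply_symm_apply φ, RelIso.apply_symm_apply φ] at this
    rw [← this]
    exact h4 _ _ hne' hnadj'

end Transfer

lemma isSRG_G' : IsSRG K4.G' 12 9 6 9 := by
  refine ⟨?_, ?_, ?_, ?_⟩
  · rw [Nat.card_eq_fintype_card]; decide
  · intro x
    rw [Nat.card_eq_fintype_card]
    norm_cast
    revert x
    decide
  · intro x y hxy
    rw [Nat.card_eq_fintype_card]
    norm_cast
    revert hxy
    revert x y
    decide
  · intro x y hne hnadj
    rw [Nat.card_eq_fintype_card]
    norm_cast
    revert hne hnadj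
    revert x y
    decide

theorem NU34_isSRG' (F : Type) [Field F] [Fintype F] (hF : Fintype.card F = 4) :
    IsSRG (NU F 2 2) 12 9 6 9 := by
  obtain ⟨φ⟩ := exists_iso hF
  exact isSRG_of_iso φ isSRG_G'

/-- For `q = 2`, the graph `NU(3,4)` is strongly regular with parameters
`(12, 9, 6, 9)`. -/
theorem NU34_isSRG (hF : Fintype.card F = 4) :
    IsSRG (NU F 2 2) 12 9 6 9 := NU34_isSRG' F hF
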